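/- Let S = {x_1,...,x_{⌊n/2⌋}} ⊆ X_n and let Q = {A ⊆ X_n : A ⊆ S or S ⊆ A} be the cone of S. Then Q has cardinality 2^{⌊n/2⌋} + 2^{⌈n/2⌉} − 1, and Q is an optimal set of questions: for every probability distribution μ on X_n, c_Q(μ) = Opt(μ). -/

import Mathlib

namespace TQ

/-- A decision tree: internal nodes are labeled by questions (subsets of `α`,
with the two children corresponding to Yes/No), leaves by elements of `α`. -/
inductive DTree (α : Type) where
  | leaf (x : α) : DTree α
  | node (q : Finset α) (yes no : DTree α) : DTree α

namespace DTree

variable {α : Type} [DecidableEq α]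

/-- The list of leaf labels of a decision tree. -/
def leaves : DTree α → List α
  | .leaf x => [x]
  | .node _ t f => leaves t ++ leaves f

/-- The set of questions appearing at internal nodes. -/
def questions : DTree α → Set (Finset α)
  | .leaf _ => ∅
  | .node q t f => insert q (questions t ∪ questions f)

/-- Follow the path of `x` (Yes-edge iff `x` belongs to the question);
returns `some d` iff the path ends at a leaf labeled `x`, at depth `d`. -/
def find? : DTree α → α → Option ℕ
  | .leaf y, x => if y = x then some 0 else none
  | .node q t f, x => (if x ∈ q then find? t x else find? f x).map (· + 1)

/-- The depth of the leaf labeled `x` (junk value `0` if the path of `x`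
does not end at a leaf labeled `x`). -/
def depth (T : DTree α) (x : α) : ℕ := (T.find? x).getD 0

end DTree

variable {α : Type} [Fintype α] [DecidableEq α]

/-- `μ` is a probability distribution on `α`. -/
def IsDistribution (μ : α → ℝ) : Prop := (∀ x, 0 ≤ μ x) ∧ ∑ x, μ x = 1

/-- `T` is valid for `μ`: its leaves are distinct, the set of leaf labels is the
support of `μ`, and for every `x` in the support the path of `x` ends at the
leaf labeled `x`. -/
structure IsValid (T : DTree α) (μ : α → ℝ) : Prop where
  nodup : T.leaves.Nodup
  mem_leaves : ∀ x, x ∈ T.leaves ↔ μ x ≠ 0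
  finds : ∀ x, μ x ≠ 0 → T.find? x = some (T.depth x)

/-- The cost of `T` on `μ`: the average depth `∑ x, μ(x) · T(x)`. -/
noncomputable def cost (T : DTree α) (μ : α → ℝ) : ℝ := ∑ x, μ x * (T.depth x : ℝ)

/-- All questions of `T` belong to `Q`. -/
def UsesQuestions (T : DTree α) (Q : Set (Finset α)) : Prop := T.questions ⊆ Q

/-- `Opt(μ)`: the optimal cost over all decision trees valid for `μ`. -/
noncomputable def OptCost (μ : α → ℝ) : ℝ :=
  sInf { c | ∃ T : DTree α, IsValid T μ ∧ c = cost T μ }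

/-- `c_Q(μ)`: the optimal cost over decision trees valid for `μ`
using only questions from `Q`. -/
noncomputable def cQ (Q : Set (Finset α)) (μ : α → ℝ) : ℝ :=
  sInf { c | ∃ T : DTree α, IsValid T μ ∧ UsesQuestions T Q ∧ c = cost T μ }

/-- The base-2 (Shannon) entropy of `μ`. (Note `Real.logb 2 0 = 0`.) -/
noncomputable def entropy (μ : α → ℝ) : ℝ := ∑ x, -(μ x * Real.logb 2 (μ x))

/-- `Q` achieves prolixity `r`: for every distribution there is a valid tree using
only questions from `Q` of cost at most `Opt(μ) + r`. -/
def AchievesProlixity {n : ℕ} (Q : Finset (Finset (Fin n))) (r : ℝ) : Prop :=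
  ∀ μ : Fin n → ℝ, IsDistribution μ →
    ∃ T : DTree (Fin n), IsValid T μ ∧ UsesQuestions T ↑Q ∧ cost T μ ≤ OptCost μ + r

/-- `Q` achieves redundancy `r`: for every distribution there is a valid tree using
only questions from `Q` of cost at most `H(μ) + r`. -/
def AchievesRedundancy {n : ℕ} (Q : Finset (Finset (Fin n))) (r : ℝ) : Prop :=
  ∀ μ : Fin n → ℝ, IsDistribution μ →
    ∃ T : DTree (Fin n), IsValid T μ ∧ UsesQuestions T ↑Q ∧ cost T μ ≤ entropy μ + r

/-- `u_Opt(n,r)`: the minimum cardinality of a set of questions achieving prolixity `r`. -/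
noncomputable def uOpt (n : ℕ) (r : ℝ) : ℕ :=
  sInf { k | ∃ Q : Finset (Finset (Fin n)), Q.card = k ∧ AchievesProlixity Q r }

/-- `u_H(n,r)`: the minimum cardinality of a set of questions achieving redundancy `r`. -/
noncomputable def uH (n : ℕ) (r : ℝ) : ℕ :=
  sInf { k | ∃ Q : Finset (Finset (Fin n)), Q.card = k ∧ AchievesRedundancy Q r }

end TQ

namespace ConeAux

open TQ

variable {α : Type} [DecidableEq α]

/-- The height of a decision tree. -/
def height : TQ.DTree α → ℕ
  | .leaf _ => 0
  | .node _ t f => max (height t) (height f) + 1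

lemma find_le_height (T : TQ.DTree α) (x : α) (k : ℕ) (h : T.find? x = some k) :
    k ≤ height T := by
  induction T generalizing k with
  | leaf y =>
    simp only [TQ.DTree.find?] at h
    split_ifs at h
    simp only [Option.some.injEq] at h
    simp [height, ← h]
  | node q t f iht ihf =>
    simp only [TQ.DTree.find?] at h
    rcases Option.map_eq_some_iff.mp h with ⟨j, hj, hk⟩
    subst hk
    by_cases hq : x ∈ q
    · rw [if_pos hq] at hj
      have := iht j hj
      simp [height]; omega
    · rw [if_neg hq] at hj
      have := ihf j hj
      simp [height]; omega

/-- Kraft's inequality for decision trees. -/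
lemma kraft (T : TQ.DTree α) : ∀ (D : ℕ), height T ≤ D →
    ∀ C : Finset α, (∀ x ∈ C, (T.find? x).isSome = true) →
    ∑ x ∈ C, 2 ^ (D - (T.find? x).getD 0) ≤ 2 ^ D := by
  induction T with
  | leaf y =>
    intro D _ C hC
    have hsub : C ⊆ {y} := by
      intro x hx
      have := hC x hx
      simp only [TQ.DTree.find?] at this
      split_ifs at this with h
      · simp [h]
      · simp at this
    calc ∑ x ∈ C, 2 ^ (D - ((TQ.DTree.leaf y).find? x).getD 0)
        ≤ ∑ x ∈ ({y} : Finset α), 2 ^ (D - ((TQ.DTree.leaf y).find? x).getD 0) :=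
          Finset.sum_le_sum_of_subset hsub
      _ = 2 ^ D := by simp [TQ.DTree.find?]
  | node q t f iht ihf =>
    intro D hD C hC
    have hD1 : 1 ≤ D := by
      simp only [height] at hD; omega
    have hht : height t ≤ D - 1 := by simp only [height] at hD; omega
    have hhf : height f ≤ D - 1 := by simp only [height] at hD; omega
    rw [← Finset.sum_filter_add_sum_filter_not C (fun x => x ∈ q)]
    have h1 : ∑ x ∈ C.filter (fun x => x ∈ q), 2 ^ (D - ((TQ.DTree.node q t f).find? x).getD 0)
        = ∑ x ∈ C.filter (fun x => x ∈ q), 2 ^ ((D - 1) - (t.find? x).getD 0) := by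
      refine Finset.sum_congr rfl fun x hx => ?_
      rcases Finset.mem_filter.mp hx with ⟨hxC, hxq⟩
      have hs := hC x hxC
      simp only [TQ.DTree.find?, if_pos hxq] at hs ⊢
      rcases htx : t.find? x with _ | k
      · simp [htx] at hs
      · simp only [htx, Option.map_some, Option.getD_some]
        congr 1; omega
    have h2 : ∑ x ∈ C.filter (fun x => ¬ x ∈ q), 2 ^ (D - ((TQ.DTree.node q t f).find? x).getD 0)
        = ∑ x ∈ C.filter (fun x => ¬ x ∈ q), 2 ^ ((D - 1) - (f.find? x).getD 0) := by
      refine Finset.sum_congr rfl fun x hx => ?_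
      rcases Finset.mem_filter.mp hx with ⟨hxC, hxq⟩
      have hs := hC x hxC
      simp only [TQ.DTree.find?, if_neg hxq] at hs ⊢
      rcases htx : f.find? x with _ | k
      · simp [htx] at hs
      · simp only [htx, Option.map_some, Option.getD_some]
        congr 1; omega
    have b1 : ∑ x ∈ C.filter (fun x => x ∈ q), 2 ^ ((D - 1) - (t.find? x).getD 0) ≤ 2 ^ (D - 1) := by
      refine iht (D - 1) hht _ fun x hx => ?_
      rcases Finset.mem_filter.mp hx with ⟨hxC, hxq⟩
      have hs := hC x hxC
      simp only [TQ.DTree.find?, if_pos hxq] at hs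
      simpa using hs
    have b2 : ∑ x ∈ C.filter (fun x => ¬ x ∈ q), 2 ^ ((D - 1) - (f.find? x).getD 0) ≤ 2 ^ (D - 1) := by
      refine ihf (D - 1) hhf _ fun x hx => ?_
      rcases Finset.mem_filter.mp hx with ⟨hxC, hxq⟩
      have hs := hC x hxC
      simp only [TQ.DTree.find?, if_neg hxq] at hs
      simpa using hs
    have hDD : 2 ^ (D - 1) + 2 ^ (D - 1) = 2 ^ D := by
      have h : D - 1 + 1 = D := by omega
      calc 2 ^ (D - 1) + 2 ^ (D - 1) = 2 ^ (D - 1) * 2 := by ring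
        _ = 2 ^ (D - 1 + 1) := (pow_succ 2 (D - 1)).symm
        _ = 2 ^ D := by rw [h]
    rw [h1, h2]
    omega

/-- Greedy: a family of powers of two, each at most `2^m`, with total at least `2^m`,
contains a subfamily summing to exactly `2^m`. -/
lemma exists_subset_sum_pow : ∀ (m : ℕ) (C : Finset α) (e : α → ℕ),
    (∀ x ∈ C, e x ≤ m) → 2 ^ m ≤ ∑ x ∈ C, 2 ^ e x →
    ∃ Y, Y ⊆ C ∧ ∑ x ∈ Y, 2 ^ e x = 2 ^ m := by
  intro m
  induction m with
  | zero =>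
    intro C e he hsum
    have hC : C.Nonempty := by
      rcases Finset.eq_empty_or_nonempty C with rfl | h
      · simp at hsum
      · exact h
    obtain ⟨x, hx⟩ := hC
    refine ⟨{x}, Finset.singleton_subset_iff.mpr hx, ?_⟩
    have h0 : e x = 0 := Nat.le_zero.mp (he x hx)
    simp [h0]
  | succ m ihm =>
    intro C e he hsum
    by_cases hex : ∃ x ∈ C, e x = m + 1
    · obtain ⟨x, hx, hex⟩ := hex
      exact ⟨{x}, Finset.singleton_subset_iff.mpr hx, by simp [hex]⟩
    · push_neg at hex
      have he' : ∀ x ∈ C, e x ≤ m := fun x hx => by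
        have h1 := he x hx; have h2 := hex x hx; omega
      have hpow : 2 ^ (m + 1) = 2 ^ m + 2 ^ m := by rw [pow_succ]; ring
      obtain ⟨Y₁, hY₁C, hY₁⟩ := ihm C e he' (by omega)
      have hsd : ∑ x ∈ C \ Y₁, 2 ^ e x + ∑ x ∈ Y₁, 2 ^ e x = ∑ x ∈ C, 2 ^ e x :=
        Finset.sum_sdiff hY₁C
      obtain ⟨Y₂, hY₂C, hY₂⟩ := ihm (C \ Y₁) e
        (fun x hx => he' x (Finset.mem_sdiff.mp hx).1) (by omega)
      have hdisj : Disjoint Y₁ Y₂ := by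
        rw [Finset.disjoint_left]
        intro a ha hb
        exact (Finset.mem_sdiff.mp (hY₂C hb)).2 ha
      refine ⟨Y₁ ∪ Y₂, Finset.union_subset hY₁C (hY₂C.trans Finset.sdiff_subset), ?_⟩
      rw [Finset.sum_union hdisj, hY₁, hY₂]
      omega

/-- The key splitting lemma: a weighted set of size ≥ 2 with total weight at most
`2^(D+1)` can be split into two halves, each of weight at most `2^D`, such that one
half is inside `S` or the other half is disjoint from `S`. -/
lemma exists_split (S C : Finset α) (e : α → ℕ) (D : ℕ)
    (h2 : 2 ≤ C.card) (hsum : ∑ x ∈ C, 2 ^ e x ≤ 2 ^ (D + 1)) :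
    ∃ Y, Y ⊆ C ∧ Y.Nonempty ∧ (C \ Y).Nonempty ∧
      (Y ⊆ S ∨ ∀ x ∈ C \ Y, x ∉ S) ∧
      ∑ x ∈ Y, 2 ^ e x ≤ 2 ^ D ∧ ∑ x ∈ C \ Y, 2 ^ e x ≤ 2 ^ D := by
  have hpow : 2 ^ (D + 1) = 2 ^ D + 2 ^ D := by rw [pow_succ]; ring
  have hone : ∀ Z : Finset α, 1 ≤ ∑ x ∈ Z, 2 ^ e x → Z.Nonempty := by
    intro Z hZ
    rcases Finset.eq_empty_or_nonempty Z with rfl | h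
    · simp at hZ
    · exact h
  have he : ∀ x ∈ C, e x ≤ D := by
    intro x hx
    obtain ⟨y, hy, hyx⟩ := Finset.exists_mem_ne (show 1 < C.card by omega) x
    have hpair : ({x, y} : Finset α) ⊆ C := by
      intro z hz
      rcases Finset.mem_insert.mp hz with rfl | hz
      · exact hx
      · rw [Finset.mem_singleton] at hz; subst hz; exact hy
    have hps : 2 ^ e x + 2 ^ e y ≤ ∑ z ∈ C, 2 ^ e z := by
      have hp := Finset.sum_pair (f := fun z => 2 ^ e z) (Ne.symm hyx)
      calc 2 ^ e x + 2 ^ e y = ∑ z ∈ ({x, y} : Finset α), 2 ^ e z := hp.symm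
        _ ≤ _ := Finset.sum_le_sum_of_subset hpair
    have h1 : 1 ≤ 2 ^ e y := Nat.one_le_pow _ _ (by norm_num)
    have h2x : 2 ^ e x < 2 ^ (D + 1) := by omega
    have := (Nat.pow_lt_pow_iff_right (by norm_num : 1 < 2)).mp h2x
    omega
  set P := C.filter (fun x => x ∈ S) with hP
  set R := C.filter (fun x => ¬ x ∈ S) with hR
  have hPR : ∑ x ∈ P, 2 ^ e x + ∑ x ∈ R, 2 ^ e x = ∑ x ∈ C, 2 ^ e x :=
    Finset.sum_filter_add_sum_filter_not C _ _
  have hPC : P ⊆ C := Finset.filter_subset _ _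
  have hRC : R ⊆ C := Finset.filter_subset _ _
  rcases Nat.lt_or_ge (2 ^ D) (∑ x ∈ P, 2 ^ e x) with hp | hp
  · obtain ⟨Y, hYP, hYs⟩ := exists_subset_sum_pow D P e (fun x hx => he x (hPC hx)) hp.le
    have hYC : Y ⊆ C := hYP.trans hPC
    have hsd : ∑ x ∈ C \ Y, 2 ^ e x + ∑ x ∈ Y, 2 ^ e x = ∑ x ∈ C, 2 ^ e x :=
      Finset.sum_sdiff hYC
    have hPle : ∑ x ∈ P, 2 ^ e x ≤ ∑ x ∈ C, 2 ^ e x := Finset.sum_le_sum_of_subset hPC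
    have h2D : 1 ≤ 2 ^ D := Nat.one_le_pow _ _ (by norm_num)
    exact ⟨Y, hYC, hone Y (by omega), hone _ (by omega),
      Or.inl (fun x hx => (Finset.mem_filter.mp (hYP hx)).2), by omega, by omega⟩
  rcases Nat.lt_or_ge (2 ^ D) (∑ x ∈ R, 2 ^ e x) with hr | hr
  · obtain ⟨Y', hYR, hYs⟩ := exists_subset_sum_pow D R e (fun x hx => he x (hRC hx)) hr.le
    have hYC : Y' ⊆ C := hYR.trans hRC
    have hsd : ∑ x ∈ C \ Y', 2 ^ e x + ∑ x ∈ Y', 2 ^ e x = ∑ x ∈ C, 2 ^ e x :=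
      Finset.sum_sdiff hYC
    have h2D : 1 ≤ 2 ^ D := Nat.one_le_pow _ _ (by norm_num)
    have hRle : ∑ x ∈ R, 2 ^ e x ≤ ∑ x ∈ C, 2 ^ e x := Finset.sum_le_sum_of_subset hRC
    have hcc : C \ (C \ Y') = Y' := Finset.sdiff_sdiff_eq_self hYC
    refine ⟨C \ Y', Finset.sdiff_subset, hone _ (by omega), ?_, ?_, by omega, ?_⟩
    · rw [hcc]; exact hone _ (by omega)
    · right; rw [hcc]; intro x hx; exact (Finset.mem_filter.mp (hYR hx)).2
    · rw [hcc]; omega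
  · have htot : ∑ x ∈ C, 2 ^ e x ≤ 2 ^ D ∨ (P.Nonempty ∧ R.Nonempty) := by
      rcases Finset.eq_empty_or_nonempty P with hPe | hPne
      · left; rw [hPe] at hPR; simp only [Finset.sum_empty] at hPR; omega
      rcases Finset.eq_empty_or_nonempty R with hRe | hRne
      · left; rw [hRe] at hPR; simp only [Finset.sum_empty] at hPR; omega
      · right; exact ⟨hPne, hRne⟩
    rcases htot with htot | ⟨hPne, hRne⟩
    · have hCne : C.Nonempty := Finset.card_pos.mp (by omega)
      obtain ⟨x, hx⟩ := hCne
      have hxC : ({x} : Finset α) ⊆ C := Finset.singleton_subset_iff.mpr hx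
      have hcard : 1 ≤ (C \ {x}).card := by
        rw [Finset.card_sdiff_of_subset hxC, Finset.card_singleton]; omega
      have hs1 : ∑ y ∈ ({x} : Finset α), 2 ^ e y ≤ 2 ^ D :=
        le_trans (Finset.sum_le_sum_of_subset hxC) htot
      have hs2 : ∑ y ∈ C \ {x}, 2 ^ e y ≤ 2 ^ D :=
        le_trans (Finset.sum_le_sum_of_subset Finset.sdiff_subset) htot
      by_cases hxS : x ∈ S
      · exact ⟨{x}, hxC, Finset.singleton_nonempty x, Finset.card_pos.mp (by omega),
          Or.inl (Finset.singleton_subset_iff.mpr hxS), hs1, hs2⟩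
      · have hcc : C \ (C \ {x}) = {x} := Finset.sdiff_sdiff_eq_self hxC
        refine ⟨C \ {x}, Finset.sdiff_subset, Finset.card_pos.mp (by omega), ?_, ?_, hs2, ?_⟩
        · rw [hcc]; exact Finset.singleton_nonempty x
        · right; rw [hcc]; intro y hy; rw [Finset.mem_singleton] at hy; subst hy; exact hxS
        · rw [hcc]; exact hs1
    · have hCP : C \ P = R := by
        rw [hR, hP, Finset.filter_not]
      refine ⟨P, hPC, hPne, by rw [hCP]; exact hRne,
        Or.inl (fun x hx => (Finset.mem_filter.mp hx).2), hp, by rw [hCP]; exact hr⟩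

/-- The main construction: given a Kraft-admissible depth budget on a nonempty set `C`,
there is a decision tree with leaf set `C` using only questions from the cone of `S`
that finds every element of `C` within its budget. -/
lemma buildTree (S : Finset α) : ∀ (N : ℕ) (C : Finset α), C.card ≤ N → C.Nonempty →
    ∀ (D : ℕ) (e : α → ℕ), (∑ x ∈ C, 2 ^ e x) ≤ 2 ^ D →
    ∃ T : TQ.DTree α, T.leaves.Nodup ∧ T.leaves.toFinset = C ∧
      (∀ A ∈ T.questions, A ⊆ S ∨ S ⊆ A) ∧
      (∀ x ∈ C, ∃ k, T.find? x = some k ∧ k + e x ≤ D) := by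
  intro N
  induction N with
  | zero =>
    intro C hcard hne _ _ _
    exact absurd (Finset.card_pos.mpr hne) (by omega)
  | succ N ih =>
    intro C hcard hne D e hsum
    rcases Nat.lt_or_ge C.card 2 with h1 | h2
    · have hc1 : C.card = 1 := by
        have := Finset.card_pos.mpr hne; omega
      obtain ⟨x, rfl⟩ := Finset.card_eq_one.mp hc1
      refine ⟨.leaf x, by simp [TQ.DTree.leaves], by simp [TQ.DTree.leaves],
        by simp [TQ.DTree.questions], ?_⟩
      intro y hy
      rw [Finset.mem_singleton] at hy; subst hy
      refine ⟨0, by simp [TQ.DTree.find?], ?_⟩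
      simp only [Finset.sum_singleton] at hsum
      have := (Nat.pow_le_pow_iff_right (by norm_num : 1 < 2)).mp hsum
      omega
    · have hD1 : 1 ≤ D := by
        by_contra h
        have hD0 : D = 0 := by omega
        subst hD0
        have hle : C.card ≤ ∑ x ∈ C, 2 ^ e x := by
          calc C.card = ∑ _x ∈ C, 1 := by simp
          _ ≤ _ := Finset.sum_le_sum (fun x _ => Nat.one_le_pow _ _ (by norm_num))
        simp only [pow_zero] at hsum
        omega
      obtain ⟨D', rfl⟩ : ∃ D', D = D' + 1 := ⟨D - 1, by omega⟩
      obtain ⟨Y, hYC, hYne, hCYne, hside, hsY, hsCY⟩ := exists_split S C e D' h2 hsum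
      have hYlt : Y.card < C.card := by
        refine Finset.card_lt_card ⟨hYC, fun hCY => ?_⟩
        obtain ⟨z, hz⟩ := hCYne
        exact (Finset.mem_sdiff.mp hz).2 (hCY (Finset.mem_sdiff.mp hz).1)
      have hCYlt : (C \ Y).card < C.card := by
        have hc1 := Finset.card_sdiff_of_subset hYC
        have hc2 := Finset.card_pos.mpr hYne
        have hc3 := Finset.card_le_card hYC
        omega
      obtain ⟨Tt, ntt, ftt, qtt, dtt⟩ := ih Y (by omega) hYne D' e hsY
      obtain ⟨Tf, ntf, ftf, qtf, dtf⟩ := ih (C \ Y) (by omega) hCYne D' e hsCY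
      obtain ⟨A, hA, hAY, hACY⟩ : ∃ A : Finset α, (A ⊆ S ∨ S ⊆ A) ∧
          (∀ x ∈ Y, x ∈ A) ∧ (∀ x ∈ C \ Y, x ∉ A) := by
        rcases hside with h | h
        · exact ⟨Y, Or.inl h, fun x hx => hx, fun x hx => (Finset.mem_sdiff.mp hx).2⟩
        · refine ⟨S ∪ Y, Or.inr Finset.subset_union_left,
            fun x hx => Finset.mem_union_right _ hx, fun x hx => ?_⟩
          rw [Finset.mem_union]
          push_neg
          exact ⟨h x hx, (Finset.mem_sdiff.mp hx).2⟩
      refine ⟨.node A Tt Tf, ?_, ?_, ?_, ?_⟩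
      · simp only [TQ.DTree.leaves]
        refine List.Nodup.append ntt ntf ?_
        intro a ha hb
        have ha' : a ∈ Y := by rw [← ftt]; exact List.mem_toFinset.mpr ha
        have hb' : a ∈ C \ Y := by rw [← ftf]; exact List.mem_toFinset.mpr hb
        exact (Finset.mem_sdiff.mp hb').2 ha'
      · simp only [TQ.DTree.leaves, List.toFinset_append, ftt, ftf]
        exact Finset.union_sdiff_of_subset hYC
      · intro B hB
        simp only [TQ.DTree.questions, Set.mem_insert_iff, Set.mem_union] at hB
        rcases hB with rfl | hB | hB
        · exact hA
        · exact qtt B hB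
        · exact qtf B hB
      · intro x hx
        by_cases hxY : x ∈ Y
        · obtain ⟨k, hk, hke⟩ := dtt x hxY
          refine ⟨k + 1, ?_, by omega⟩
          simp [TQ.DTree.find?, hAY x hxY, hk]
        · have hxCY : x ∈ C \ Y := Finset.mem_sdiff.mpr ⟨hx, hxY⟩
          obtain ⟨k, hk, hke⟩ := dtf x hxCY
          refine ⟨k + 1, ?_, by omega⟩
          simp [TQ.DTree.find?, hACY x hxCY, hk]

variable [Fintype α]

/-- Packaging: build a valid cone tree for `μ` given a Kraft-admissible budget. -/
lemma build_valid (S : Finset α) (μ : α → ℝ) (hμ : TQ.IsDistribution μ)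
    (C : Finset α) (hCmem : ∀ x, x ∈ C ↔ μ x ≠ 0)
    (D : ℕ) (e : α → ℕ) (hsum : ∑ x ∈ C, 2 ^ e x ≤ 2 ^ D) :
    ∃ T : TQ.DTree α, TQ.IsValid T μ ∧ (∀ A ∈ T.questions, A ⊆ S ∨ S ⊆ A) ∧
      ∀ x ∈ C, T.depth x + e x ≤ D := by
  have hCne : C.Nonempty := by
    have hex : ∃ x, μ x ≠ 0 := by
      by_contra h
      push_neg at h
      have h1 := hμ.2
      simp only [h, Finset.sum_const_zero] at h1
      norm_num at h1
    obtain ⟨x, hx⟩ := hex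
    exact ⟨x, (hCmem x).mpr hx⟩
  obtain ⟨T, hnd, hleaves, hq, hfind⟩ := buildTree S C.card C le_rfl hCne D e hsum
  have hmem : ∀ x, x ∈ T.leaves ↔ μ x ≠ 0 := by
    intro x
    rw [← List.mem_toFinset, hleaves, hCmem]
  have hfinds : ∀ x, μ x ≠ 0 → T.find? x = some (T.depth x) := by
    intro x hx
    obtain ⟨k, hk, _⟩ := hfind x ((hCmem x).mpr hx)
    rw [hk, TQ.DTree.depth, hk]
    rfl
  refine ⟨T, ⟨hnd, hmem, hfinds⟩, hq, ?_⟩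
  intro x hx
  obtain ⟨k, hk, hke⟩ := hfind x hx
  have : T.depth x = k := by rw [TQ.DTree.depth, hk]; rfl
  omega

end ConeAux

open TQ in
/-- The cone of `S = {x_1,…,x_{⌊n/2⌋}}` has cardinality `2^{⌊n/2⌋} + 2^{⌈n/2⌉} − 1`
and is an optimal set of questions: `c_Q(μ) = Opt(μ)` for every distribution `μ`. -/
theorem cone_is_optimal (n : ℕ) :
    ∀ S : Finset (Fin n), S = Finset.univ.filter (fun i : Fin n => (i : ℕ) < n / 2) →
    ∀ Q : Finset (Finset (Fin n)), Q = Finset.univ.filter (fun A => A ⊆ S ∨ S ⊆ A) →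
      Q.card = 2 ^ (n / 2) + 2 ^ ((n + 1) / 2) - 1 ∧
      ∀ μ : Fin n → ℝ, IsDistribution μ → cQ (↑Q) μ = OptCost μ := by
  intro S hS Q hQ
  constructor
  · -- cardinality computation
    have hScard : S.card = n / 2 := by
      have h1 : (Finset.univ.filter (fun i : Fin n => (i : ℕ) < n / 2)).image Fin.val
          = (Finset.range n).filter (fun m => m < n / 2) := by
        ext m
        simp only [Finset.mem_image, Finset.mem_filter, Finset.mem_univ, true_and,
          Finset.mem_range]
        constructor
        · rintro ⟨i, hi, rfl⟩; exact ⟨i.isLt, hi⟩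
        · rintro ⟨hm1, hm2⟩; exact ⟨⟨m, hm1⟩, hm2, rfl⟩
      have h2 : (Finset.range n).filter (fun m => m < n / 2) = Finset.range (n / 2) := by
        ext m
        simp only [Finset.mem_filter, Finset.mem_range]
        omega
      have h3 := Finset.card_image_of_injective
        (Finset.univ.filter (fun i : Fin n => (i : ℕ) < n / 2)) Fin.val_injective
      rw [hS, ← h3, h1, h2, Finset.card_range]
    subst hQ
    rw [Finset.filter_or]
    have hsub : Finset.univ.filter (fun A : Finset (Fin n) => A ⊆ S) = S.powerset := by
      ext A; simp [Finset.mem_powerset]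
    have hsup : Finset.univ.filter (fun A : Finset (Fin n) => S ⊆ A)
        = Sᶜ.powerset.image (fun B => Bᶜ) := by
      ext A
      simp only [Finset.mem_filter, Finset.mem_univ, true_and, Finset.mem_image,
        Finset.mem_powerset]
      constructor
      · intro h
        refine ⟨Aᶜ, ?_, compl_compl A⟩
        intro z hz
        rw [Finset.mem_compl] at hz ⊢
        exact fun hzS => hz (h hzS)
      · rintro ⟨B, hB, rfl⟩
        intro z hz
        rw [Finset.mem_compl]
        intro hzB
        exact Finset.mem_compl.mp (hB hzB) hz
    have hc1 : S.powerset.card = 2 ^ (n / 2) := by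
      rw [Finset.card_powerset, hScard]
    have hc2 : (Sᶜ.powerset.image (fun B => Bᶜ)).card = 2 ^ ((n + 1) / 2) := by
      rw [Finset.card_image_of_injective _ compl_injective, Finset.card_powerset,
        Finset.card_compl, hScard, Fintype.card_fin]
      congr 1
      omega
    have hint : S.powerset ∩ Sᶜ.powerset.image (fun B => Bᶜ) = {S} := by
      rw [← hsub, ← hsup]
      ext A
      simp only [Finset.mem_inter, Finset.mem_filter, Finset.mem_univ, true_and,
        Finset.mem_singleton]
      constructor
      · rintro ⟨ha, hb⟩; exact Finset.Subset.antisymm ha hb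
      · rintro rfl; exact ⟨Finset.Subset.refl _, Finset.Subset.refl _⟩
    have hkey := Finset.card_union_add_card_inter S.powerset (Sᶜ.powerset.image (fun B => Bᶜ))
    rw [hint, hc1, hc2, Finset.card_singleton] at hkey
    rw [hsub, hsup]
    omega
  · -- optimality
    intro μ hμ
    classical
    set C : Finset (Fin n) := Finset.univ.filter (fun x => μ x ≠ 0) with hCdef
    have hCmem : ∀ x, x ∈ C ↔ μ x ≠ 0 := by
      intro x; simp [hCdef]
    have hcone : ∀ T : DTree (Fin n), (∀ A ∈ T.questions, A ⊆ S ∨ S ⊆ A) →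
        UsesQuestions T ↑Q := by
      intro T h A hA
      rw [hQ]
      simp only [Finset.coe_filter, Finset.mem_univ, true_and, Set.mem_setOf_eq]
      exact h A hA
    have hnonneg : ∀ (T : DTree (Fin n)), 0 ≤ cost T μ := by
      intro T
      refine Finset.sum_nonneg fun x _ => ?_
      exact mul_nonneg (hμ.1 x) (Nat.cast_nonneg _)
    -- a cone tree exists
    obtain ⟨T₀, hT₀v, hT₀q, _⟩ := ConeAux.build_valid S μ hμ C hCmem C.card (fun _ => 0)
      (by simpa using (Nat.lt_two_pow_self (n := C.card)).le)
    set B := { c | ∃ T : DTree (Fin n), IsValid T μ ∧ UsesQuestions T ↑Q ∧ c = cost T μ }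
      with hBdef
    set A := { c | ∃ T : DTree (Fin n), IsValid T μ ∧ c = cost T μ } with hAdef
    have hBA : B ⊆ A := by
      rintro c ⟨T, hv, _, hc⟩
      exact ⟨T, hv, hc⟩
    have hBne : B.Nonempty := ⟨cost T₀ μ, T₀, hT₀v, hcone T₀ hT₀q, rfl⟩
    have hAne : A.Nonempty := hBne.mono hBA
    have hAbdd : BddBelow A := by
      refine ⟨0, ?_⟩
      rintro c ⟨T, _, rfl⟩
      exact hnonneg T
    have hBbdd : BddBelow B := by
      refine ⟨0, ?_⟩
      rintro c ⟨T, _, _, rfl⟩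
      exact hnonneg T
    -- key: every valid tree is dominated by a valid cone tree
    have hkey : ∀ a ∈ A, ∃ b ∈ B, b ≤ a := by
      rintro a ⟨T, hv, rfl⟩
      set D := ConeAux.height T with hD
      have hsome : ∀ x ∈ C, (T.find? x).isSome = true := by
        intro x hx
        rw [hv.finds x ((hCmem x).mp hx)]
        rfl
      have hdle : ∀ x ∈ C, T.depth x ≤ D := by
        intro x hx
        exact ConeAux.find_le_height T x (T.depth x) (hv.finds x ((hCmem x).mp hx))
      have hkraft := ConeAux.kraft T D le_rfl C hsome
      obtain ⟨T', hv', hq', hd'⟩ := ConeAux.build_valid S μ hμ C hCmem D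
        (fun x => D - T.depth x) hkraft
      refine ⟨cost T' μ, ⟨T', hv', hcone T' hq', rfl⟩, ?_⟩
      refine Finset.sum_le_sum fun x _ => ?_
      by_cases hx : μ x = 0
      · rw [hx]; simp
      · have hxC : x ∈ C := (hCmem x).mpr hx
        have h1 := hd' x hxC
        have h2 := hdle x hxC
        have h3 : T'.depth x ≤ T.depth x := by omega
        exact mul_le_mul_of_nonneg_left (Nat.cast_le.mpr h3) (hμ.1 x)
    rw [TQ.cQ, TQ.OptCost, ← hBdef, ← hAdef]
    refine le_antisymm ?_ (csInf_le_csInf hAbdd hBne hBA)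
    refine le_csInf hAne fun a ha => ?_
    obtain ⟨b, hb, hba⟩ := hkey a ha
    exact le_trans (csInf_le hBbdd hb) hba
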